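/- For all natural numbers n, r, s, the following binomial identity holds: Σ_{a=s}^{n−s} C(r+s, s) · C(a+r, a−s) · C(n−a, n−a−r−s) = Σ_{m=0}^{n} Σ_{a=0}^{m−r} (−1)^{n−a−r−s} C(m,a) · C(m−a, r) · C(2a, n−r) · C(n−m, s). -/

import Mathlib

open Finset
open Polynomial

/-- Vandermonde-type convolution with sliding lower indices. -/
lemma core1 (p : ℕ) : ∀ (N : ℕ), ∀ q, ∑ b ∈ range (N+1), (b.choose p) * ((N - b).choose q)
    = (N+1).choose (p+q+1) := by
  intro N
  induction N with
  | zero =>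
    intro q
    simp only [Finset.sum_range_one, Nat.zero_sub, Nat.choose_zero_right]
    rcases Nat.eq_zero_or_pos p with hp | hp
    · rcases Nat.eq_zero_or_pos q with hq | hq
      · simp [hp, hq]
      · rw [hp]
        simp [Nat.choose_eq_zero_of_lt hq, Nat.choose_eq_zero_of_lt (by omega : 1 < q+1)]
    · simp [Nat.choose_eq_zero_of_lt hp, Nat.choose_eq_zero_of_lt (by omega : 1 < p+q+1)]
  | succ N ih =>
    intro q
    rw [Finset.sum_range_succ]
    cases q with
    | zero =>
      have h1 : ∑ b ∈ range (N+1), (b.choose p) * ((N + 1 - b).choose 0) = (N+1).choose (p+0+1) := by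
        calc ∑ b ∈ range (N+1), (b.choose p) * ((N + 1 - b).choose 0)
            = ∑ b ∈ range (N+1), (b.choose p) * ((N - b).choose 0) := by
              apply Finset.sum_congr rfl; intro b hb; simp
          _ = _ := ih 0
      rw [h1]
      simp only [Nat.sub_self, Nat.choose_zero_right, mul_one, Nat.add_zero]
      have := Nat.choose_succ_succ' (N+1) p
      omega
    | succ q' =>
      have hsplit : ∑ b ∈ range (N+1), (b.choose p) * ((N + 1 - b).choose (q'+1))
          = ∑ b ∈ range (N+1), ((b.choose p) * ((N - b).choose q') + (b.choose p) * ((N - b).choose (q'+1))) := by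
        apply Finset.sum_congr rfl
        intro b hb
        simp only [Finset.mem_range] at hb
        have h : N + 1 - b = (N - b) + 1 := by omega
        rw [h, Nat.choose_succ_succ', Nat.mul_add]
      rw [hsplit, Finset.sum_add_distrib, ih q', ih (q'+1)]
      rw [Nat.sub_self]
      have h0 : Nat.choose 0 (q'+1) = 0 := by simp
      rw [h0, Nat.mul_zero, Nat.add_zero]
      have h2 := Nat.choose_succ_succ' (N+1) (p+q'+1)
      have e1 : p + (q'+1) + 1 = p + q' + 1 + 1 := by ring
      rw [e1]
      have e2 : p + q' + 2 = p + q' + 1 + 1 := by ring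
      omega

/-- Hockey stick. -/
lemma hockey (q : ℕ) : ∀ i, ∑ j ∈ range (i+1), (j+q).choose q = (i+q+1).choose (q+1) := by
  intro i
  induction i with
  | zero => simp
  | succ i ih =>
    rw [Finset.sum_range_succ, ih]
    have : (i+1+q+1) = (i+q+1) + 1 := by ring
    rw [this, Nat.choose_succ_succ' (i+q+1) q]
    have : i + 1 + q = i + q + 1 := by ring
    rw [this]
    omega

/-- Truncated negative binomial series: `(1-y)^(q+1) * ∑_{i≤L} C(i+q,q) y^i ≡ 1 mod y^(L+1)`. -/
lemma truncGeom {R : Type*} [CommRing R] (y : R) (L : ℕ) :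
    ∀ q, (y^(L+1)) ∣ (1-y)^(q+1) * (∑ i ∈ range (L+1), ((i+q).choose q : R) * y^i) - 1 := by
  have hgeom : (1-y) * (∑ i ∈ range (L+1), y^i) - 1 = y^(L+1) * (-1) := by
    have := geom_sum_mul y (L+1)
    linear_combination -this
  intro q
  induction q with
  | zero =>
    simp only [Nat.add_zero, Nat.choose_zero_right, Nat.cast_one, one_mul, zero_add, pow_one]
    exact ⟨-1, hgeom⟩
  | succ q ih =>
    set G : R := ∑ i ∈ range (L+1), y^i with hG
    set Sq : R := ∑ i ∈ range (L+1), ((i+q).choose q : R) * y^i with hSq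
    set Sq1 : R := ∑ i ∈ range (L+1), ((i+(q+1)).choose (q+1) : R) * y^i with hSq1
    have key : (y^(L+1)) ∣ Sq * G - Sq1 := by
      have expand : Sq * G = ∑ j ∈ range (L+1), ∑ t ∈ range (L+1), ((j+q).choose q : R) * y^(j+t) := by
        rw [hSq, hG, Finset.sum_mul_sum]
        apply Finset.sum_congr rfl; intro j _
        apply Finset.sum_congr rfl; intro t _
        rw [mul_assoc, ← pow_add]
      rw [expand]
      have hsplit : ∀ j ∈ range (L+1),
          ∑ t ∈ range (L+1), ((j+q).choose q : R) * y^(j+t)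
          = (∑ t ∈ range (L+1-j), ((j+q).choose q : R) * y^(j+t))
            + ∑ t ∈ Ico (L+1-j) (L+1), ((j+q).choose q : R) * y^(j+t) := by
        intro j hj
        simp only [Finset.mem_range] at hj
        rw [Finset.range_eq_Ico, ← Finset.sum_Ico_consecutive _ (by omega : 0 ≤ L+1-j)
          (by omega : L+1-j ≤ L+1)]
        rw [Finset.range_eq_Ico]
      rw [Finset.sum_congr rfl hsplit, Finset.sum_add_distrib]
      have hmain : ∑ j ∈ range (L+1), ∑ t ∈ range (L+1-j), ((j+q).choose q : R) * y^(j+t) = Sq1 := by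
        have hrw : ∀ i ∈ range (L+1), ((i+(q+1)).choose (q+1) : R) * y^i
            = ∑ j ∈ range (i+1), ((j+q).choose q : R) * y^i := by
          intro i _
          rw [← Finset.sum_mul, ← Nat.cast_sum, hockey q i]
          norm_cast
        rw [hSq1, Finset.sum_congr rfl hrw, Finset.sum_sigma', Finset.sum_sigma']
        refine Finset.sum_nbij' (fun p => ⟨p.1+p.2, p.1⟩) (fun p => ⟨p.2, p.1 - p.2⟩) ?_ ?_ ?_ ?_ ?_
        · rintro ⟨j,t⟩ hm
          simp only [Finset.mem_sigma, Finset.mem_range] at hm ⊢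
          obtain ⟨h1, h2⟩ := hm
          omega
        · rintro ⟨i,j⟩ hm
          simp only [Finset.mem_sigma, Finset.mem_range] at hm ⊢
          obtain ⟨h1, h2⟩ := hm
          omega
        · rintro ⟨j,t⟩ hm
          simp only [Finset.mem_sigma, Finset.mem_range] at hm
          have h : j + t - j = t := by omega
          simp [h]
        · rintro ⟨i,j⟩ hm
          simp only [Finset.mem_sigma, Finset.mem_range] at hm
          have h : j + (i - j) = i := by omega
          simp [h]
        · rintro ⟨j,t⟩ hm
          rfl
      rw [hmain]
      have hdvd2 : (y^(L+1)) ∣ ∑ j ∈ range (L+1), ∑ t ∈ Ico (L+1-j) (L+1), ((j+q).choose q : R) * y^(j+t) := by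
        apply Finset.dvd_sum; intro j hj
        apply Finset.dvd_sum; intro t ht
        simp only [Finset.mem_range] at hj
        simp only [Finset.mem_Ico] at ht
        obtain ⟨e, he⟩ : ∃ e, j + t = (L+1) + e := ⟨j+t-(L+1), by omega⟩
        refine ⟨((j+q).choose q : R) * y^e, ?_⟩
        rw [he, pow_add]; ring
      obtain ⟨c, hc⟩ := hdvd2
      exact ⟨c, by linear_combination hc⟩
    obtain ⟨c1, hc1⟩ := ih
    obtain ⟨c3, hc3⟩ := key
    refine ⟨c1*(1-y)*G - 1 - (1-y)^(q+1+1)*c3, ?_⟩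
    linear_combination ((1-y)*G) * hc1 + hgeom + (-(1-y)^(q+1+1)) * hc3

lemma coeff_eq_zero_of_X_pow_dvd {p : Polynomial ℤ} {m t : ℕ} (h : X^m ∣ p) (ht : t < m) :
    p.coeff t = 0 := by
  obtain ⟨c, hc⟩ := h
  rw [hc, mul_comm, Polynomial.coeff_mul_X_pow']
  simp [Nat.not_le_of_lt ht]

lemma core3 (q L B : ℕ) (hB : L < B) :
    (∑ i ∈ range B, ((i+q).choose q : Polynomial ℤ) * (2*X - X^2)^i).coeff L
      = ((L+2*q+1).choose (2*q+1) : ℤ) := by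
  set u : Polynomial ℤ := 2*X - X^2 with hu
  have hXu : ∀ i : ℕ, (X:Polynomial ℤ)^i ∣ u^i := by
    intro i
    exact pow_dvd_pow_of_dvd ⟨2 - X, by ring⟩ i
  -- split the sum
  have hsplit : ∑ i ∈ range B, ((i+q).choose q : Polynomial ℤ) * u^i
      = (∑ i ∈ range (L+1), ((i+q).choose q : Polynomial ℤ) * u^i)
        + ∑ i ∈ Ico (L+1) B, ((i+q).choose q : Polynomial ℤ) * u^i := by
    rw [Finset.range_eq_Ico, ← Finset.sum_Ico_consecutive _ (by omega : 0 ≤ L+1) (by omega : L+1 ≤ B)]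
    rw [Finset.range_eq_Ico]
  set S : Polynomial ℤ := ∑ i ∈ range (L+1), ((i+q).choose q : Polynomial ℤ) * u^i with hS
  set S' : Polynomial ℤ := ∑ i ∈ range (L+1), ((i+(2*q+1)).choose (2*q+1) : Polynomial ℤ) * X^i with hS'
  have htail : (∑ i ∈ Ico (L+1) B, ((i+q).choose q : Polynomial ℤ) * u^i).coeff L = 0 := by
    rw [Polynomial.finset_sum_coeff]
    apply Finset.sum_eq_zero
    intro i hi
    simp only [Finset.mem_Ico] at hi
    apply coeff_eq_zero_of_X_pow_dvd (m := L+1) _ (by omega)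
    exact Dvd.dvd.mul_left ((pow_dvd_pow X (by omega : L+1 ≤ i)).trans (hXu i)) _
  have h1 : (X:Polynomial ℤ)^(L+1) ∣ (1-X)^(2*(q+1)) * S - 1 := by
    have := truncGeom u L q
    have h1u : (1 - u) = (1-X)^2 := by rw [hu]; ring
    have : (X:Polynomial ℤ)^(L+1) ∣ (1-u)^(q+1) * S - 1 := (hXu (L+1)).trans this
    rwa [h1u, ← pow_mul] at this
  have h2 : (X:Polynomial ℤ)^(L+1) ∣ (1-X)^(2*(q+1)) * S' - 1 := by
    have := truncGeom (X : Polynomial ℤ) L (2*q+1)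
    have e : 2*q+1+1 = 2*(q+1) := by ring
    rwa [e] at this
  have hdiff : (X:Polynomial ℤ)^(L+1) ∣ (1-X)^(2*(q+1)) * (S - S') :=by
    have := dvd_sub h1 h2
    have e : (1-X)^(2*(q+1)) * S - 1 - ((1-X)^(2*(q+1)) * S' - 1) = (1-X)^(2*(q+1)) * (S - S') := by ring
    rwa [e] at this
  have hSS' : (X:Polynomial ℤ)^(L+1) ∣ S - S' := by
    set G : Polynomial ℤ := ∑ t ∈ range (L+1), X^t with hGdef
    have hgeom : (X:Polynomial ℤ)^(L+1) ∣ (1-X) * G - 1 := by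
      have := geom_sum_mul (X : Polynomial ℤ) (L+1)
      exact ⟨-1, by linear_combination -this⟩
    have hpow : (X:Polynomial ℤ)^(L+1) ∣ ((1-X)*G)^(2*(q+1)) - 1 := by
      have := geom_sum_mul ((1-X)*G) (2*(q+1))
      obtain ⟨c, hc⟩ := hgeom
      exact ⟨(∑ i ∈ range (2*(q+1)), ((1-X)*G)^i) * c, by linear_combination -this + (∑ i ∈ range (2*(q+1)), ((1-X)*G)^i) * hc⟩
    obtain ⟨c1, hc1⟩ := hpow
    obtain ⟨c2, hc2⟩ := hdiff
    have key : ((1-X)*G)^(2*(q+1)) = (1-X)^(2*(q+1)) * G^(2*(q+1)) := mul_pow _ _ _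
    refine ⟨-c1 * (S - S') + G^(2*(q+1)) * c2, ?_⟩
    linear_combination (-(S - S')) * hc1 + G^(2*(q+1)) * hc2 + (S - S') * key
  have hcoeff : S.coeff L = S'.coeff L := by
    have hz := coeff_eq_zero_of_X_pow_dvd hSS' (by omega : L < L+1)
    rw [Polynomial.coeff_sub] at hz
    linarith
  have hS'c : S'.coeff L = ((L+2*q+1).choose (2*q+1) : ℤ) := by
    rw [hS', Polynomial.finset_sum_coeff]
    have hterm : ∀ i ∈ range (L+1), ((((i+(2*q+1)).choose (2*q+1) : ℕ) : Polynomial ℤ) * X^i).coeff L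
        = if i = L then ((L+2*q+1).choose (2*q+1) : ℤ) else 0 := by
      intro i _
      rw [← Polynomial.C_eq_natCast, Polynomial.coeff_C_mul, Polynomial.coeff_X_pow]
      by_cases h : i = L
      · rw [h, if_pos rfl, if_pos rfl, mul_one,
          show L+(2*q+1) = L+2*q+1 from by omega]
      · rw [if_neg (fun hh => h hh.symm), if_neg h, mul_zero]
    rw [Finset.sum_congr rfl hterm, Finset.sum_ite_eq' (range (L+1)) L
      (fun _ => ((L+2*q+1).choose (2*q+1) : ℤ))]
    simp
  rw [hsplit, Polynomial.coeff_add, htail, add_zero, hcoeff, hS'c]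

lemma core2 (N k : ℕ) :
    ∑ a ∈ range (N+1), (-1:ℤ)^a * (N.choose a : ℤ) * ((2*a).choose k : ℤ)
      = (-1:ℤ)^N * (if N ≤ k then (2:ℤ)^(2*N-k) * (N.choose (k-N) : ℤ) else 0) := by
  have hexp : ((1 : Polynomial ℤ) - (X+1)^2)^N
      = ∑ a ∈ range (N+1), Polynomial.C ((-1:ℤ)^a * (N.choose a : ℤ)) * (X+1)^(2*a) := by
    rw [sub_eq_add_neg, add_comm, add_pow]
    apply Finset.sum_congr rfl
    intro a _
    rw [one_pow, mul_one, neg_pow, ← pow_mul, Polynomial.C_mul, Polynomial.C_pow,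
      Polynomial.C_neg, Polynomial.C_1, Polynomial.C_eq_natCast]
    push_cast
    ring
  have hfact : ((1 : Polynomial ℤ) - (X+1)^2)^N
      = Polynomial.C ((-1:ℤ)^N) * ((X + Polynomial.C 2)^N * X^N) := by
    have hb : ((1 : Polynomial ℤ) - (X+1)^2) = Polynomial.C (-1:ℤ) * ((X + Polynomial.C 2) * X) := by
      have h2 : (Polynomial.C (2:ℤ)) = (2 : Polynomial ℤ) := by norm_num
      have h1 : (Polynomial.C (-1:ℤ)) = (-1 : Polynomial ℤ) := by norm_num
      rw [h2, h1]; ring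
    rw [hb, mul_pow, mul_pow, Polynomial.C_pow]
  have hco1 : (((1 : Polynomial ℤ) - (X+1)^2)^N).coeff k
      = ∑ a ∈ range (N+1), (-1:ℤ)^a * (N.choose a : ℤ) * ((2*a).choose k : ℤ) := by
    rw [hexp, Polynomial.finset_sum_coeff]
    apply Finset.sum_congr rfl
    intro a _
    rw [Polynomial.coeff_C_mul, Polynomial.coeff_X_add_one_pow]
  have hco2 : (((1 : Polynomial ℤ) - (X+1)^2)^N).coeff k
      = (-1:ℤ)^N * (if N ≤ k then (2:ℤ)^(2*N-k) * (N.choose (k-N) : ℤ) else 0) := by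
    rw [hfact, Polynomial.coeff_C_mul, Polynomial.coeff_mul_X_pow']
    congr 1
    by_cases h : N ≤ k
    · rw [if_pos h, if_pos h, Polynomial.coeff_X_add_C_pow,
        show N - (k - N) = 2*N - k from by omega]
    · rw [if_neg h, if_neg h]
  rw [← hco1, hco2]

lemma conv1 (n r p : ℕ) (hrp : r ≤ p) :
    ∑ a ∈ range (n+1), (a+r).choose p * (n-a).choose p = (n+r+1).choose (2*p+1) := by
  have h := core1 p (n+r) p
  rw [Finset.range_eq_Ico, ← Finset.sum_Ico_consecutive _ (by omega : 0 ≤ r)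
    (by omega : r ≤ n+r+1)] at h
  have h0 : ∑ b ∈ Ico 0 r, (b.choose p) * ((n+r-b).choose p) = 0 := by
    apply Finset.sum_eq_zero
    intro b hb
    simp only [Finset.mem_Ico] at hb
    rw [Nat.choose_eq_zero_of_lt (by omega : b < p), Nat.zero_mul]
  rw [h0, zero_add, Finset.sum_Ico_eq_sum_range] at h
  have e : n + r + 1 - r = n + 1 := by omega
  rw [e] at h
  have h2 : ∑ i ∈ range (n+1), ((r+i).choose p) * ((n+r-(r+i)).choose p)
      = ∑ a ∈ range (n+1), (a+r).choose p * (n-a).choose p := by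
    apply Finset.sum_congr rfl
    intro a _
    rw [show n+r-(r+a) = n-a from by omega, Nat.add_comm r a]
  rw [h2] at h
  rw [h, show p+p+1 = 2*p+1 from by omega]

lemma lhsN (n r s : ℕ) :
    ∑ a ∈ Icc s (n-s), ((r+s).choose s * (a+r).choose (a-s)
        * (if a+r+s ≤ n then (n-a).choose (n-a-r-s) else 0))
      = (r+s).choose s * (n+r+1).choose (2*(r+s)+1) := by
  have hsub : Icc s (n-s) ⊆ range (n+1) := by
    intro a ha
    simp only [Finset.mem_Icc] at ha
    simp only [Finset.mem_range]
    omega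
  have hstep : ∑ a ∈ Icc s (n-s), ((r+s).choose s * (a+r).choose (a-s)
        * (if a+r+s ≤ n then (n-a).choose (n-a-r-s) else 0))
      = ∑ a ∈ range (n+1), (r+s).choose s * ((a+r).choose (r+s) * (n-a).choose (r+s)) := by
    rw [← Finset.sum_subset hsub]
    · apply Finset.sum_congr rfl
      intro a ha
      simp only [Finset.mem_Icc] at ha
      have hsa : s ≤ a := ha.1
      have han : a + s ≤ n := by omega
      have h1 : (a+r).choose (a-s) = (a+r).choose (r+s) := by
        rw [show a - s = a + r - (r+s) from by omega]
        exact Nat.choose_symm (by omega)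
      rw [h1]
      by_cases h : a + r + s ≤ n
      · rw [if_pos h, show n-a-r-s = (n-a) - (r+s) from by omega,
          Nat.choose_symm (by omega : r + s ≤ n - a)]
        ring
      · rw [if_neg h, Nat.choose_eq_zero_of_lt (by omega : n - a < r + s)]
        ring
    · intro a ha hna
      simp only [Finset.mem_range] at ha
      simp only [Finset.mem_Icc] at hna
      rcases (by omega : a < s ∨ n - s < a) with h | h
      · rw [Nat.choose_eq_zero_of_lt (by omega : a + r < r + s)]
        ring
      · rw [Nat.choose_eq_zero_of_lt (by omega : n - a < r + s)]
        ring
  rw [hstep, ← Finset.mul_sum, conv1 n r (r+s) (by omega)]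

lemma trinom1 {m a r : ℕ} (h : a + r ≤ m) :
    m.choose a * (m-a).choose r = m.choose r * (m-r).choose a := by
  have h1 := Nat.choose_mul (n := m) (show r ≤ m - a by omega)
  rw [Nat.choose_symm (show a ≤ m by omega)] at h1
  rw [show m - a - r = (m - r) - a from by omega] at h1
  rw [Nat.choose_symm (show a ≤ m - r by omega)] at h1
  exact h1

lemma trinom2 (r s k : ℕ) :
    (r+k).choose r * k.choose s = (r+s).choose s * (r+k).choose (r+s) := by
  by_cases hsk : s ≤ k
  · have h1 := Nat.choose_mul (n := r + k) hsk
    rw [← Nat.choose_symm_add] at h1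
    have h2 := Nat.choose_mul (n := r + k) (show s ≤ r + s by omega)
    rw [show r + s - s = r from by omega] at h2
    have hsymm := Nat.choose_symm (show k - s ≤ r + k - s by omega)
    rw [show r + k - s - (k - s) = r from by omega] at hsymm
    calc (r+k).choose r * k.choose s
        = (r+k).choose s * (r+k-s).choose (k-s) := h1
      _ = (r+k).choose s * (r+k-s).choose r := by rw [hsymm]
      _ = (r+s).choose s * (r+k).choose (r+s) := by rw [← h2]; exact mul_comm _ _
  · rw [Nat.choose_eq_zero_of_lt (by omega : k < s),
      Nat.choose_eq_zero_of_lt (by omega : r + k < r + s)]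
    ring

lemma filter_eq (m r : ℕ) (h : r ≤ m) :
    (range (m+1)).filter (fun a => a + r ≤ m) = range (m-r+1) := by
  ext a
  simp only [Finset.mem_filter, Finset.mem_range]
  omega

lemma filter_empty (m r : ℕ) (h : m < r) :
    (range (m+1)).filter (fun a => a + r ≤ m) = ∅ := by
  ext a
  simp only [Finset.mem_filter, Finset.mem_range, Finset.notMem_empty, iff_false]
  omega

lemma rhs_inner (n r s m : ℕ) (hrm : r ≤ m) (hmn : m ≤ n) :
    ∑ a ∈ (range (m+1)).filter (fun a => a + r ≤ m),
        (-1:ℤ)^(n+a+r+s) * ((m.choose a * (m-a).choose r * (2*a).choose (n-r) * (n-m).choose s : ℕ) : ℤ)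
    = (-1:ℤ)^(n+r+s) * (-1:ℤ)^(m-r) * (((n-m).choose s * (m.choose r) * ((m-r).choose (n-m)) : ℕ) : ℤ)
        * 2^(2*(m-r)-(n-r)) := by
  rw [filter_eq m r hrm]
  have hterm : ∀ a ∈ range (m-r+1),
      (-1:ℤ)^(n+a+r+s) * ((m.choose a * (m-a).choose r * (2*a).choose (n-r) * (n-m).choose s : ℕ) : ℤ)
      = ((-1:ℤ)^(n+r+s) * (((n-m).choose s * (m.choose r) : ℕ) : ℤ))
        * ((-1:ℤ)^a * ((m-r).choose a : ℤ) * (((2*a).choose (n-r) : ℕ) : ℤ)) := by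
    intro a ha
    simp only [Finset.mem_range] at ha
    rw [show n+a+r+s = (n+r+s)+a from by omega, pow_add]
    rw [show m.choose a * (m-a).choose r = m.choose r * (m-r).choose a from trinom1 (by omega)]
    push_cast
    ring
  rw [Finset.sum_congr rfl hterm, ← Finset.mul_sum, core2 (m-r) (n-r)]
  rw [if_pos (show m - r ≤ n - r from by omega)]
  rw [show (n-r) - (m-r) = n - m from by omega]
  push_cast
  ring

lemma coeff_two_sub (e j : ℕ) :
    (((2:Polynomial ℤ) - X)^e).coeff j = (-1:ℤ)^j * 2^(e-j) * (e.choose j : ℤ) := by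
  by_cases hje : j ≤ e
  · have hb : ((2:Polynomial ℤ) - X) = (Polynomial.C (-1:ℤ)) * (X + Polynomial.C (-2:ℤ)) := by
      have h1 : (Polynomial.C (-1:ℤ)) = (-1 : Polynomial ℤ) := by norm_num
      have h2 : (Polynomial.C (-2:ℤ)) = (-2 : Polynomial ℤ) := by norm_num
      rw [h1, h2]; ring
    rw [hb, mul_pow, ← Polynomial.C_pow, Polynomial.coeff_C_mul,
      Polynomial.coeff_X_add_C_pow]
    rw [show (-2:ℤ)^(e-j) = (-1:ℤ)^(e-j) * 2^(e-j) from by rw [← neg_one_mul, mul_pow]]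
    rw [show (-1:ℤ)^e = (-1:ℤ)^((e-j)+j) from by rw [show (e-j)+j = e from by omega]]
    rw [pow_add]
    have h4 : (-1:ℤ)^((e-j)*2) = 1 := by rw [mul_comm, pow_mul]; norm_num
    ring_nf
    rw [h4]
    ring
  · rw [Nat.choose_eq_zero_of_lt (by omega : e < j)]
    have : (((2:Polynomial ℤ) - X)^e).natDegree < j := by
      apply lt_of_le_of_lt (Polynomial.natDegree_pow_le.trans _) (by omega : e < j)
      have : ((2:Polynomial ℤ) - X).natDegree ≤ 1 := by
        apply Polynomial.natDegree_sub_le_iff_left _ |>.mpr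
        · simp [Polynomial.natDegree_X]
        · simp
      calc e * ((2:Polynomial ℤ) - X).natDegree ≤ e * 1 := Nat.mul_le_mul_left e this
        _ = e := by omega
    rw [Polynomial.coeff_eq_zero_of_natDegree_lt this]
    push_cast
    ring

lemma rhsN (n r s : ℕ) :
    ∑ m ∈ range (n+1), ∑ a ∈ (range (m+1)).filter (fun a => a + r ≤ m),
        (-1:ℤ)^(n+a+r+s) * ((m.choose a * (m-a).choose r * (2*a).choose (n-r) * (n-m).choose s : ℕ) : ℤ)
    = (((r+s).choose s * (n+r+1).choose (2*(r+s)+1) : ℕ) : ℤ) := by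
  by_cases hrn : r ≤ n
  · set M := n - r with hM
    -- reduce outer sum to k-sum
    have hstep : ∑ m ∈ range (n+1), ∑ a ∈ (range (m+1)).filter (fun a => a + r ≤ m),
        (-1:ℤ)^(n+a+r+s) * ((m.choose a * (m-a).choose r * (2*a).choose (n-r) * (n-m).choose s : ℕ) : ℤ)
        = ∑ k ∈ range (M+1), (-1:ℤ)^(n+r+s) * (-1:ℤ)^k
            * (((M-k).choose s * ((r+k).choose r) * (k.choose (M-k)) : ℕ) : ℤ) * 2^(2*k-M) := by
      rw [Finset.range_eq_Ico, ← Finset.sum_Ico_consecutive _ (show 0 ≤ r from by omega)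
        (show r ≤ n+1 from by omega)]
      have hz : ∑ m ∈ Ico 0 r, ∑ a ∈ (range (m+1)).filter (fun a => a + r ≤ m),
          (-1:ℤ)^(n+a+r+s) * ((m.choose a * (m-a).choose r * (2*a).choose (n-r) * (n-m).choose s : ℕ) : ℤ) = 0 := by
        apply Finset.sum_eq_zero
        intro m hm
        simp only [Finset.mem_Ico] at hm
        rw [filter_empty m r (by omega), Finset.sum_empty]
      rw [hz, zero_add, Finset.sum_Ico_eq_sum_range]
      rw [show n + 1 - r = M + 1 from by omega]
      apply Finset.sum_congr rfl
      intro k hk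
      simp only [Finset.mem_range] at hk
      rw [rhs_inner n r s (r+k) (by omega) (by omega)]
      rw [show r + k - r = k from by omega, show n - (r+k) = M - k from by omega,
        show n - r = M from rfl]
    rw [hstep]
    by_cases h2s : 2*s ≤ M
    · -- main case: convert to coefficient extraction
      have claim : ∀ k ∈ range (M+1),
          (-1:ℤ)^(n+r+s) * (-1:ℤ)^k
            * (((M-k).choose s * ((r+k).choose r) * (k.choose (M-k)) : ℕ) : ℤ) * 2^(2*k-M)
          = (((r+k).choose r * k.choose s : ℕ) : ℤ)
            * ((((2:Polynomial ℤ) - X)^(k-s) * X^(k+s)).coeff M) := by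
        intro k hk
        simp only [Finset.mem_range] at hk
        rw [Polynomial.coeff_mul_X_pow']
        by_cases hks : k + s ≤ M
        · rw [if_pos hks, coeff_two_sub]
          by_cases hsk : s ≤ k
          · by_cases h2k : M ≤ 2*k
            · rw [show (M-k).choose s * ((r+k).choose r) * (k.choose (M-k))
                  = ((r+k).choose r * k.choose s) * ((k-s).choose (M-(k+s))) from by
                    have h5 := Nat.choose_mul (n := k)
                      (show s ≤ M - k from by omega)
                    rw [show M - k - s = M - (k+s) from by omega] at h5
                    calc (M-k).choose s * ((r+k).choose r) * (k.choose (M-k))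
                        = ((r+k).choose r) * (k.choose (M-k) * (M-k).choose s) := by ring
                      _ = ((r+k).choose r) * (k.choose s * (k-s).choose (M-(k+s))) := by rw [h5]
                      _ = _ := by ring]
              rw [show (-1:ℤ)^(n+r+s) * (-1:ℤ)^k = (-1:ℤ)^(M-(k+s)) from by
                rw [← pow_add, show n+r+s+k = (M-(k+s)) + 2*(r+s+k) from by omega,
                  pow_add, pow_mul]
                norm_num]
              rw [show (k-s)-(M-(k+s)) = 2*k-M from by omega]
              push_cast
              ring
            · have hA : (M-k).choose s * ((r+k).choose r) * (k.choose (M-k)) = 0 := by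
                rw [Nat.choose_eq_zero_of_lt (show k < M - k from by omega)]
                ring
              rw [hA, Nat.choose_eq_zero_of_lt (show k - s < M - (k+s) from by omega)]
              push_cast
              ring
          · rw [Nat.choose_eq_zero_of_lt (show k < s from by omega)]
            have hA : (M-k).choose s * ((r+k).choose r) * (k.choose (M-k)) = 0 := by
              by_cases h3 : M - k ≤ k
              · rw [Nat.choose_eq_zero_of_lt (show M - k < s from by omega)]
                ring
              · rw [Nat.choose_eq_zero_of_lt (show k < M - k from by omega)]
                ring
            rw [hA]
            push_cast
            ring
        · rw [if_neg hks]
          have hA : (M-k).choose s * ((r+k).choose r) * (k.choose (M-k)) = 0 := by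
            rw [Nat.choose_eq_zero_of_lt (show M - k < s from by omega)]
            ring
          rw [hA]
          push_cast
          ring
      rw [Finset.sum_congr rfl claim]
      have hsum : ∑ k ∈ range (M+1), (((r+k).choose r * k.choose s : ℕ) : ℤ)
            * ((((2:Polynomial ℤ) - X)^(k-s) * X^(k+s)).coeff M)
          = (∑ k ∈ range (M+1), (((r+k).choose r * k.choose s : ℕ) : Polynomial ℤ)
              * (((2:Polynomial ℤ) - X)^(k-s) * X^(k+s))).coeff M := by
        rw [Polynomial.finset_sum_coeff]
        apply Finset.sum_congr rfl
        intro k _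
        rw [← Polynomial.C_eq_natCast, Polynomial.coeff_C_mul]
      rw [hsum]
      have hT : (∑ k ∈ range (M+1), (((r+k).choose r * k.choose s : ℕ) : Polynomial ℤ)
              * (((2:Polynomial ℤ) - X)^(k-s) * X^(k+s)))
          = (((r+s).choose s : ℕ) : Polynomial ℤ) * (X^(2*s)
              * ∑ i ∈ range (M-s+1), (((i+(r+s)).choose (r+s) : ℕ) : Polynomial ℤ) * (2*X - X^2)^i) := by
        rw [Finset.mul_sum, Finset.mul_sum]
        rw [Finset.range_eq_Ico, ← Finset.sum_Ico_consecutive _ (show 0 ≤ s from by omega)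
          (show s ≤ M+1 from by omega)]
        have hz2 : ∑ k ∈ Ico 0 s, (((r+k).choose r * k.choose s : ℕ) : Polynomial ℤ)
            * (((2:Polynomial ℤ) - X)^(k-s) * X^(k+s)) = 0 := by
          apply Finset.sum_eq_zero
          intro k hk
          simp only [Finset.mem_Ico] at hk
          rw [Nat.choose_eq_zero_of_lt (show k < s from by omega)]
          push_cast
          ring
        rw [hz2, zero_add, Finset.sum_Ico_eq_sum_range]
        rw [show M + 1 - s = M - s + 1 from by omega]
        apply Finset.sum_congr rfl
        intro i hi
        rw [show s + i - s = i from by omega, show s + i + s = 2*s + i from by omega]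
        rw [show (r+(s+i)).choose r * (s+i).choose s
            = (r+s).choose s * ((r+(s+i)).choose (r+s)) from trinom2 r s (s+i)]
        rw [show r + (s+i) = i + (r+s) from by omega]
        rw [show (2*X - X^2 : Polynomial ℤ) = X * (2 - X) from by ring, mul_pow, pow_add]
        push_cast
        ring
      rw [hT]
      rw [← Polynomial.C_eq_natCast, Polynomial.coeff_C_mul]
      have hco := Polynomial.coeff_X_pow_mul (∑ i ∈ range (M-s+1),
        (((i+(r+s)).choose (r+s) : ℕ) : Polynomial ℤ) * (2*X - X^2)^i) (2*s) (M - 2*s)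
      rw [show M - 2*s + 2*s = M from by omega] at hco
      rw [hco]
      rw [core3 (r+s) (M-2*s) (M-s+1) (by omega)]
      rw [show M - 2*s + 2*(r+s) + 1 = n+r+1 from by omega]
      push_cast
      ring
    · -- degenerate case M < 2s : everything vanishes
      have h0 : ∑ k ∈ range (M+1), (-1:ℤ)^(n+r+s) * (-1:ℤ)^k
          * (((M-k).choose s * ((r+k).choose r) * (k.choose (M-k)) : ℕ) : ℤ) * 2^(2*k-M) = 0 := by
        apply Finset.sum_eq_zero
        intro k hk
        simp only [Finset.mem_range] at hk
        have hA : (M-k).choose s * ((r+k).choose r) * (k.choose (M-k)) = 0 := by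
          by_cases h3 : M - k ≤ k
          · by_cases h4 : s ≤ M - k
            · omega
            · rw [Nat.choose_eq_zero_of_lt (show M - k < s from by omega)]
              ring
          · rw [Nat.choose_eq_zero_of_lt (show k < M - k from by omega)]
            ring
        rw [hA]
        push_cast
        ring
      rw [h0, Nat.choose_eq_zero_of_lt (show n+r+1 < 2*(r+s)+1 from by omega)]
      simp
  · -- r > n : outer sum is empty of contributions
    have h0 : ∑ m ∈ range (n+1), ∑ a ∈ (range (m+1)).filter (fun a => a + r ≤ m),
        (-1:ℤ)^(n+a+r+s) * ((m.choose a * (m-a).choose r * (2*a).choose (n-r) * (n-m).choose s : ℕ) : ℤ) = 0 := by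
      apply Finset.sum_eq_zero
      intro m hm
      simp only [Finset.mem_range] at hm
      rw [filter_empty m r (by omega), Finset.sum_empty]
    rw [h0, Nat.choose_eq_zero_of_lt (show n+r+1 < 2*(r+s)+1 from by omega)]
    simp

/- On the left-hand side, `C(n-a, n-a-r-s)` is `0` when `n-a-r-s < 0` (i.e. when
`a + r + s > n`), which is made explicit by the `if`-guard (truncated natural
subtraction would otherwise not be faithful).  On the right-hand side, the inner sum
over `a` ranges over `0 ≤ a ≤ m - r` (empty when `m < r`), encoded by the filter
`a + r ≤ m`; the sign `(-1)^(n-a-r-s)` is written as `(-1)^(n+a+r+s)`, which has the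
same parity on every nonvanishing term. -/
theorem stmt_8 (n r s : ℕ) :
    (∑ a ∈ Finset.Icc s (n - s),
        (((r + s).choose s * (a + r).choose (a - s)
          * (if a + r + s ≤ n then (n - a).choose (n - a - r - s) else 0) : ℕ) : ℤ))
      = ∑ m ∈ Finset.range (n + 1),
          ∑ a ∈ (Finset.range (m + 1)).filter (fun a => a + r ≤ m),
            (-1 : ℤ) ^ (n + a + r + s) *
              ((m.choose a * (m - a).choose r * (2 * a).choose (n - r)
                * (n - m).choose s : ℕ) : ℤ) := by
  rw [← Nat.cast_sum, lhsN n r s]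
  exact (rhsN n r s).symm
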